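/- For every k ≥ 1, every vector (μ_1, …, μ_k) of nonnegative reals, and every real α > 0, the hockey-stick divergence between the product Gaussian measures satisfies H_α(⊗_{i=1}^{k} N(μ_i, 1)‖⊗_{i=1}^{k} N(0, 1)) = H_α(N(√(μ_1² + ⋯ + μ_k²), 1)‖N(0, 1)); i.e. the (non-adaptive) composition of k Gaussian mechanisms with parameters μ_1, …, μ_k is exactly as distinguishable as a single unit-variance Gaussian pair with means √(Σ μ_i²) apart. -/

import Mathlib

open MeasureTheory ProbabilityTheory Real

/-- Hockey-stick divergence `H_α(P‖Q) = sup_E (P(E) − α·Q(E))`. -/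
noncomputable def hockeyStick {Ω : Type*} [MeasurableSpace Ω] (α : ℝ) (P Q : Measure Ω) : ℝ :=
  ⨆ E : {E : Set Ω // MeasurableSet E}, ((P E).toReal - α * (Q E).toReal)

open scoped NNReal ENNReal

section Auxiliary

lemma pdf_conv_pointwise (m m' : ℝ) {v v' : ℝ≥0} (hv : v ≠ 0) (hv' : v' ≠ 0) (t : ℝ) (x : ℝ) :
    gaussianPDFReal m v x * gaussianPDFReal (m' + x) v' t
      = gaussianPDFReal (m + m') (v + v') t *
        ((Real.sqrt (π / ((v + v' : ℝ≥0) / (2 * v * v'))))⁻¹ *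
          Real.exp (-((v + v' : ℝ≥0) / (2 * v * v')) *
            (x - (m + v * (t - m - m') / (v + v')))^2)) := by
  have hV : (0:ℝ) < v := lt_of_le_of_ne v.coe_nonneg (by exact_mod_cast (Ne.symm hv))
  have hV' : (0:ℝ) < v' := lt_of_le_of_ne v'.coe_nonneg (by exact_mod_cast (Ne.symm hv'))
  have hπ := Real.pi_pos
  set V : ℝ := (v:ℝ)
  set V' : ℝ := (v':ℝ)
  have hcoe : ((v + v' : ℝ≥0) : ℝ) = V + V' := by push_cast; ring
  unfold gaussianPDFReal
  rw [hcoe]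
  set b : ℝ := (V + V') / (2 * V * V') with hb
  have hbpos : 0 < b := by positivity
  have hC : (Real.sqrt (2 * π * V))⁻¹ * (Real.sqrt (2 * π * V'))⁻¹
      = (Real.sqrt (2 * π * (V + V')))⁻¹ * (Real.sqrt (π / b))⁻¹ := by
    rw [← mul_inv, ← mul_inv, ← Real.sqrt_mul (by positivity), ← Real.sqrt_mul (by positivity)]
    congr 1
    rw [hb]
    field_simp
  have hE : Real.exp (-(x - m)^2 / (2 * V)) * Real.exp (-(t - (m' + x))^2 / (2 * V'))
      = Real.exp (-(t - (m + m'))^2 / (2 * (V + V'))) *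
        Real.exp (-b * (x - (m + V * (t - m - m') / (V + V')))^2) := by
    rw [← Real.exp_add, ← Real.exp_add]
    congr 1
    rw [hb]
    field_simp
    ring
  calc (Real.sqrt (2 * π * V))⁻¹ * Real.exp (-(x - m)^2 / (2 * V)) *
        ((Real.sqrt (2 * π * V'))⁻¹ * Real.exp (-(t - (m' + x))^2 / (2 * V')))
      = ((Real.sqrt (2 * π * V))⁻¹ * (Real.sqrt (2 * π * V'))⁻¹) *
        (Real.exp (-(x - m)^2 / (2 * V)) * Real.exp (-(t - (m' + x))^2 / (2 * V'))) := by ring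
    _ = _ := by rw [hC, hE]; ring

lemma pdf_conv_integral (m m' : ℝ) {v v' : ℝ≥0} (hv : v ≠ 0) (hv' : v' ≠ 0) (t : ℝ) :
    ∫ x : ℝ, gaussianPDFReal m v x * gaussianPDFReal (m' + x) v' t
      = gaussianPDFReal (m + m') (v + v') t := by
  have hV : (0:ℝ) < v := lt_of_le_of_ne v.coe_nonneg (by exact_mod_cast (Ne.symm hv))
  have hV' : (0:ℝ) < v' := lt_of_le_of_ne v'.coe_nonneg (by exact_mod_cast (Ne.symm hv'))
  have hcoe : ((v + v' : ℝ≥0) : ℝ) = (v:ℝ) + (v':ℝ) := by push_cast; ring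
  set b : ℝ := ((v + v' : ℝ≥0) : ℝ) / (2 * v * v') with hb
  have hbpos : 0 < b := by rw [hb, hcoe]; positivity
  set x₀ : ℝ := m + v * (t - m - m') / ((v + v' : ℝ≥0) : ℝ) with hx₀
  have hpt : ∀ x, gaussianPDFReal m v x * gaussianPDFReal (m' + x) v' t
      = gaussianPDFReal (m + m') (v + v') t * ((Real.sqrt (π / b))⁻¹ *
          Real.exp (-b * (x - x₀)^2)) := fun x => pdf_conv_pointwise m m' hv hv' t x
  simp_rw [hpt]
  rw [MeasureTheory.integral_const_mul, MeasureTheory.integral_const_mul]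
  have : ∫ x : ℝ, Real.exp (-b * (x - x₀)^2) = Real.sqrt (π / b) := by
    rw [← integral_gaussian b]
    exact integral_sub_right_eq_self (μ := volume) (fun y => Real.exp (-b * y^2)) x₀
  rw [this, inv_mul_cancel₀ (by positivity), mul_one]

lemma pdf_conv_integrable (m m' : ℝ) {v v' : ℝ≥0} (hv : v ≠ 0) (hv' : v' ≠ 0) (t : ℝ) :
    Integrable (fun x : ℝ => gaussianPDFReal m v x * gaussianPDFReal (m' + x) v' t) := by
  have hV : (0:ℝ) < v := lt_of_le_of_ne v.coe_nonneg (by exact_mod_cast (Ne.symm hv))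
  have hV' : (0:ℝ) < v' := lt_of_le_of_ne v'.coe_nonneg (by exact_mod_cast (Ne.symm hv'))
  have hcoe : ((v + v' : ℝ≥0) : ℝ) = (v:ℝ) + (v':ℝ) := by push_cast; ring
  set b : ℝ := ((v + v' : ℝ≥0) : ℝ) / (2 * v * v') with hb
  have hbpos : 0 < b := by rw [hb, hcoe]; positivity
  set x₀ : ℝ := m + v * (t - m - m') / ((v + v' : ℝ≥0) : ℝ) with hx₀
  have hpt : (fun x : ℝ => gaussianPDFReal m v x * gaussianPDFReal (m' + x) v' t)
      = fun x => gaussianPDFReal (m + m') (v + v') t * ((Real.sqrt (π / b))⁻¹ *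
          Real.exp (-b * (x - x₀)^2)) := funext fun x => pdf_conv_pointwise m m' hv hv' t x
  rw [hpt]
  exact (((integrable_exp_neg_mul_sq hbpos).comp_sub_right x₀).const_mul _).const_mul _

lemma gaussianPDF_conv (m m' : ℝ) {v v' : ℝ≥0} (hv : v ≠ 0) (hv' : v' ≠ 0) (t : ℝ) :
    ∫⁻ x : ℝ, gaussianPDF m v x * gaussianPDF (m' + x) v' t
      = gaussianPDF (m + m') (v + v') t := by
  unfold gaussianPDF
  simp_rw [← ENNReal.ofReal_mul (gaussianPDFReal_nonneg m v _)]
  rw [← ofReal_integral_eq_lintegral_ofReal (pdf_conv_integrable m m' hv hv' t)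
    (ae_of_all _ fun x => mul_nonneg (gaussianPDFReal_nonneg _ _ _) (gaussianPDFReal_nonneg _ _ _)),
    pdf_conv_integral m m' hv hv' t]

lemma measurable_gaussianPDF₂ (m' : ℝ) (v' : ℝ≥0) :
    Measurable (fun p : ℝ × ℝ => gaussianPDF (m' + p.1) v' p.2) := by
  unfold gaussianPDF gaussianPDFReal
  fun_prop

lemma gaussian_conv (m m' : ℝ) (v v' : ℝ≥0) :
    Measure.map (fun p : ℝ × ℝ => p.1 + p.2) ((gaussianReal m v).prod (gaussianReal m' v'))
      = gaussianReal (m + m') (v + v') := by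
  by_cases hv : v = 0
  · subst hv
    rw [gaussianReal_zero_var, Measure.dirac_prod, Measure.map_map (by fun_prop) (by fun_prop)]
    have : (fun p : ℝ × ℝ => p.1 + p.2) ∘ (Prod.mk m) = (m + ·) := rfl
    rw [this, gaussianReal_map_const_add, add_comm m' m, zero_add]
  by_cases hv' : v' = 0
  · subst hv'
    rw [gaussianReal_zero_var, Measure.prod_dirac, Measure.map_map (by fun_prop) (by fun_prop)]
    have : (fun p : ℝ × ℝ => p.1 + p.2) ∘ (fun x => (x, m')) = (· + m') := rfl
    rw [this, gaussianReal_map_add_const, add_zero]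
  ext s hs
  rw [Measure.map_apply (by fun_prop) hs,
    Measure.prod_apply (hs.preimage (by fun_prop))]
  have h1 : ∀ x : ℝ, Prod.mk x ⁻¹' ((fun p : ℝ × ℝ => p.1 + p.2) ⁻¹' s)
      = (fun y => x + y) ⁻¹' s := fun x => rfl
  have h2 : ∀ x : ℝ, gaussianReal m' v' ((fun y => x + y) ⁻¹' s)
      = ∫⁻ t in s, gaussianPDF (m' + x) v' t := by
    intro x
    rw [← Measure.map_apply (by fun_prop) hs, gaussianReal_map_const_add,
      gaussianReal_apply _ hv' s]
  simp_rw [h1, h2]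
  rw [gaussianReal_of_var_ne_zero m hv,
    lintegral_withDensity_eq_lintegral_mul _ (measurable_gaussianPDF m v)
      (Measurable.lintegral_prod_right (f := fun x t => gaussianPDF (m' + x) v' t) (measurable_gaussianPDF₂ m' v'))]
  simp only [Pi.mul_apply]
  have h3 : ∀ x : ℝ, gaussianPDF m v x * ∫⁻ t in s, gaussianPDF (m' + x) v' t
      = ∫⁻ t in s, gaussianPDF m v x * gaussianPDF (m' + x) v' t := by
    intro x
    rw [lintegral_const_mul _ (by unfold gaussianPDF gaussianPDFReal; fun_prop)]
  simp_rw [h3]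
  rw [lintegral_lintegral_swap]
  swap
  · apply Measurable.aemeasurable
    unfold gaussianPDF gaussianPDFReal
    fun_prop
  have h4 : ∀ t : ℝ, ∫⁻ x, gaussianPDF m v x * gaussianPDF (m' + x) v' t
      = gaussianPDF (m + m') (v + v') t := fun t => gaussianPDF_conv m m' hv hv' t
  simp_rw [h4]
  rw [← gaussianReal_apply _ (by simp [hv, hv']) s]

lemma map_sum_pi : ∀ (n : ℕ) (c m : Fin n → ℝ),
    Measure.map (fun x : Fin n → ℝ => ∑ i, c i * x i)
        (Measure.pi fun i => gaussianReal (m i) 1)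
      = gaussianReal (∑ i, c i * m i) (Real.toNNReal (∑ i, (c i)^2)) := by
  intro n
  induction n with
  | zero =>
    intro c m
    simp only [Finset.univ_eq_empty, Finset.sum_empty]
    rw [show (fun _ : Fin 0 → ℝ => (0:ℝ)) = (fun _ => 0) from rfl, Measure.map_const]
    simp [Real.toNNReal_zero]
  | succ n ih =>
    intro c m
    rw [← ((measurePreserving_piFinSuccAbove (fun i => gaussianReal (m i) 1) 0).symm).map_eq,
      Measure.map_map (by fun_prop) (MeasurableEquiv.measurable _)]
    have hcomp : (fun x : Fin (n+1) → ℝ => ∑ i, c i * x i) ∘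
          (MeasurableEquiv.piFinSuccAbove (fun _ => ℝ) 0).symm
        = (fun p : ℝ × ℝ => p.1 + p.2) ∘
          (Prod.map (fun a : ℝ => c 0 * a) (fun y : Fin n → ℝ => ∑ j, c j.succ * y j)) := by
      ext p
      simp only [Function.comp_apply, MeasurableEquiv.piFinSuccAbove_symm_apply,
        Fin.insertNthEquiv, Equiv.coe_fn_mk, Fin.insertNth_zero, Fin.sum_univ_succ,
        Fin.cons_zero, Fin.cons_succ, Prod.map_apply, Fin.zero_succAbove, cast_eq, Prod.map]
    rw [hcomp, ← Measure.map_map (by fun_prop) (by fun_prop)]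
    have hmaps : Measure.map
          (Prod.map (fun a : ℝ => c 0 * a) (fun y : Fin n → ℝ => ∑ j, c j.succ * y j))
          ((gaussianReal (m 0) 1).prod
            (Measure.pi fun j : Fin n => gaussianReal (m ((0 : Fin (n+1)).succAbove j)) 1))
        = (gaussianReal (c 0 * m 0) (⟨(c 0)^2, sq_nonneg _⟩ * 1)).prod
          (gaussianReal (∑ j : Fin n, c j.succ * m j.succ) (Real.toNNReal (∑ j : Fin n, (c j.succ)^2))) := by
    
      rw [← Measure.map_prod_map _ _ (by fun_prop) (by fun_prop)]
      congr 1
      · exact gaussianReal_map_const_mul (c 0)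
      · simp_rw [Fin.zero_succAbove]
        exact ih (fun j => c j.succ) (fun j => m j.succ)
    rw [hmaps, gaussian_conv]
    congr 1
    · rw [Fin.sum_univ_succ]
    · ext
      push_cast
      rw [Real.coe_toNNReal _ (Finset.sum_nonneg fun i _ => sq_nonneg _),
        Real.coe_toNNReal _ (Finset.sum_nonneg fun i _ => sq_nonneg _), Fin.sum_univ_succ]
      change c 0 ^ 2 * 1 + _ = _
      ring

noncomputable def gRatio (m t : ℝ) : ℝ≥0∞ := ENNReal.ofReal (Real.exp (m * t - m^2/2))

@[fun_prop]
lemma measurable_gRatio (m : ℝ) : Measurable (gRatio m) := by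
  unfold gRatio; fun_prop

lemma measurable_prod_gRatio {n : ℕ} (m : Fin n → ℝ) :
    Measurable (fun x : Fin n → ℝ => ∏ i, gRatio (m i) (x i)) :=
  Finset.measurable_prod _ fun j _ => (measurable_gRatio _).comp (measurable_pi_apply _)

lemma map_withDensity_equiv {α β : Type*} [MeasurableSpace α] [MeasurableSpace β]
    (e : α ≃ᵐ β) (μ : Measure α) (f : β → ℝ≥0∞) (hf : Measurable f) :
    Measure.map e (μ.withDensity (fun a => f (e a))) = (Measure.map e μ).withDensity f := by
  ext s hs
  rw [Measure.map_apply e.measurable hs, withDensity_apply _ hs,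
    withDensity_apply _ (e.measurable hs), setLIntegral_map hs hf e.measurable]

lemma prod_withDensity {α β : Type*} [MeasurableSpace α] [MeasurableSpace β]
    (μ : Measure α) (ν : Measure β) (f : α → ℝ≥0∞) (g : β → ℝ≥0∞)
    (hf : Measurable f) (hg : Measurable g) [SFinite μ] [SFinite ν]
    [SigmaFinite (μ.withDensity f)] [SigmaFinite (ν.withDensity g)] :
    (μ.withDensity f).prod (ν.withDensity g)
      = (μ.prod ν).withDensity (fun p => f p.1 * g p.2) := by
  have h : (μ.withDensity f).prod (ν.withDensity g)
      = (μ.prod ν).withDensity (fun p => f p.1 * g p.2) := Measure.prod_eq (fun s t hs ht => by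
      rw [withDensity_apply _ (hs.prod ht), ← Measure.prod_restrict,
        lintegral_prod_mul hf.aemeasurable hg.aemeasurable,
        withDensity_apply _ hs, withDensity_apply _ ht])
  exact h

lemma gaussianReal_eq_withDensity (m : ℝ) :
    gaussianReal m 1 = (gaussianReal 0 1).withDensity (gRatio m) := by
  rw [gaussianReal_of_var_ne_zero m one_ne_zero, gaussianReal_of_var_ne_zero 0 one_ne_zero,
    ← withDensity_mul _ (measurable_gaussianPDF 0 1) (measurable_gRatio m)]
  congr 1
  funext t
  simp only [Pi.mul_apply, gaussianPDF, gRatio]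
  rw [← ENNReal.ofReal_mul (gaussianPDFReal_nonneg 0 1 t)]
  congr 1
  unfold gaussianPDFReal
  rw [NNReal.coe_one]
  have h : rexp (-(t - 0)^2/(2*1)) * rexp (m * t - m^2/2) = rexp (-(t - m)^2/(2*1)) := by
    rw [← Real.exp_add]; congr 1; ring
  rw [mul_assoc ((Real.sqrt (2 * π * 1))⁻¹), h]

lemma pi_gaussian_withDensity : ∀ (n : ℕ) (m : Fin n → ℝ),
    Measure.pi (fun i => gaussianReal (m i) 1)
      = (Measure.pi fun _ : Fin n => gaussianReal 0 1).withDensity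
          (fun x => ∏ i, gRatio (m i) (x i)) := by
  intro n
  induction n with
  | zero =>
    intro m
    have h1 : (fun x : Fin 0 → ℝ => ∏ i, gRatio (m i) (x i)) = (1 : (Fin 0 → ℝ) → ℝ≥0∞) := by
      funext x; simp
    rw [h1, withDensity_one]
    exact congrArg Measure.pi (funext fun i => i.elim0)
  | succ n ih =>
    intro m
    have hsf1 : SigmaFinite ((gaussianReal 0 1).withDensity (gRatio (m 0))) := by
      rw [← gaussianReal_eq_withDensity]; infer_instance
    have hsf2 : SigmaFinite ((Measure.pi fun _ : Fin n => gaussianReal 0 1).withDensity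
        (fun y => ∏ j, gRatio (m j.succ) (y j))) := by
      rw [← ih (fun j => m j.succ)]; infer_instance
    rw [← ((measurePreserving_piFinSuccAbove (fun i => gaussianReal (m i) 1) 0).symm).map_eq]
    have htail : (Measure.pi fun j : Fin n => gaussianReal (m ((0 : Fin (n+1)).succAbove j)) 1)
        = (Measure.pi fun _ : Fin n => gaussianReal 0 1).withDensity
            (fun y => ∏ j, gRatio (m j.succ) (y j)) := by
      simp_rw [Fin.zero_succAbove]
      exact ih (fun j => m j.succ)
    rw [htail, gaussianReal_eq_withDensity (m 0), prod_withDensity _ _ _ _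
      (measurable_gRatio (m 0)) (by fun_prop)]
    have hcompf : (fun p : ℝ × (Fin n → ℝ) => gRatio (m 0) p.1 * ∏ j, gRatio (m j.succ) (p.2 j))
        = fun p : ℝ × (Fin n → ℝ) =>
            (fun x : Fin (n+1) → ℝ => ∏ i, gRatio (m i) (x i))
              ((MeasurableEquiv.piFinSuccAbove (fun _ => ℝ) 0).symm p) := by
      funext p
      simp only [MeasurableEquiv.piFinSuccAbove_symm_apply, Fin.insertNthEquiv, Equiv.coe_fn_mk,
        Fin.insertNth_zero, Fin.prod_univ_succ, Fin.cons_zero, Fin.cons_succ, cast_eq]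
    rw [hcompf, map_withDensity_equiv ((MeasurableEquiv.piFinSuccAbove (fun _ : Fin (n+1) => ℝ) 0).symm)
      _ (fun x : Fin (n+1) → ℝ => ∏ i, gRatio (m i) (x i)) (measurable_prod_gRatio m)]
    rw [((measurePreserving_piFinSuccAbove (fun _ : Fin (n+1) => gaussianReal 0 1) 0).symm).map_eq]

section opt
variable {Ω : Type*} [MeasurableSpace Ω]

lemma opt_bound (Q : Measure Ω) [IsProbabilityMeasure Q] (r : Ω → ℝ) (hr : Measurable r)
    (hr0 : ∀ x, 0 ≤ r x) (hint : Integrable r Q) (α : ℝ)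
    (E : Set Ω) (hE : MeasurableSet E) :
    ((Q.withDensity fun x => ENNReal.ofReal (r x)) E).toReal - α * (Q E).toReal
      ≤ ((Q.withDensity fun x => ENNReal.ofReal (r x)) {x | α < r x}).toReal
          - α * (Q {x | α < r x}).toReal := by
  set P := Q.withDensity fun x => ENNReal.ofReal (r x) with hP
  have hEs : MeasurableSet {x | α < r x} := measurableSet_lt measurable_const hr
  have key : ∀ (F : Set Ω), MeasurableSet F →
      (P F).toReal - α * (Q F).toReal = ∫ x in F, (r x - α) ∂Q := by
    intro F hF
    have h1 : (P F).toReal = ∫ x in F, r x ∂Q := by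
      rw [hP, withDensity_apply _ hF,
        ← ofReal_integral_eq_lintegral_ofReal hint.restrict (ae_of_all _ hr0),
        ENNReal.toReal_ofReal (integral_nonneg hr0)]
    have h2 : ∫ x in F, (r x - α) ∂Q = (∫ x in F, r x ∂Q) - α * (Q F).toReal := by
      rw [integral_sub hint.restrict (integrable_const α), setIntegral_const]
      simp [smul_eq_mul, mul_comm, measureReal_def]
    rw [h1, h2]
  rw [key E hE, key _ hEs]
  set g : Ω → ℝ := fun x => r x - α with hg
  have hgint : Integrable g Q := hint.sub (integrable_const α)
  have hgpint : Integrable (fun x => max (g x) 0) Q := hgint.pos_part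
  calc ∫ x in E, g x ∂Q ≤ ∫ x in E, max (g x) 0 ∂Q :=
        setIntegral_mono hgint.restrict hgpint.restrict (fun x => le_max_left _ _)
    _ ≤ ∫ x, max (g x) 0 ∂Q :=
        setIntegral_le_integral hgpint (ae_of_all _ fun x => le_max_right _ _)
    _ = ∫ x in {x | α < r x}, max (g x) 0 ∂Q := by
        rw [← integral_add_compl hEs hgpint]
        have hz : ∫ x in {x | α < r x}ᶜ, max (g x) 0 ∂Q = 0 := by
          apply setIntegral_eq_zero_of_forall_eq_zero
          intro x hx
          simp only [Set.mem_compl_iff, Set.mem_setOf_eq, not_lt] at hx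
          simp [hg, max_eq_right, sub_nonpos.mpr hx]
        rw [hz, add_zero]
    _ = ∫ x in {x | α < r x}, g x ∂Q := by
        apply setIntegral_congr_fun hEs
        intro x hx
        simp only [Set.mem_setOf_eq] at hx
        simp [hg, max_eq_left, sub_nonneg.mpr hx.le]

lemma hockeyStick_eq_of_optimal (α : ℝ) (P Q : Measure Ω) (Es : Set Ω) (hEs : MeasurableSet Es)
    (hopt : ∀ E : Set Ω, MeasurableSet E →
      (P E).toReal - α * (Q E).toReal ≤ (P Es).toReal - α * (Q Es).toReal) :
    hockeyStick α P Q = (P Es).toReal - α * (Q Es).toReal := by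
  refine le_antisymm (ciSup_le fun E => hopt E.1 E.2) ?_
  exact le_ciSup (f := fun E : {E : Set Ω // MeasurableSet E} =>
    (P E).toReal - α * (Q E).toReal)
    ⟨_, by rintro v ⟨E, rfl⟩; exact hopt E.1 E.2⟩ (⟨Es, hEs⟩ : {E : Set Ω // MeasurableSet E})

lemma hockeyStick_self (α : ℝ) (P : Measure Ω) [IsProbabilityMeasure P] :
    hockeyStick α P P = max (1 - α) 0 := by
  set f : {E : Set Ω // MeasurableSet E} → ℝ :=
    fun E => (P E).toReal - α * (P E).toReal with hf
  have hub : ∀ E : {E : Set Ω // MeasurableSet E}, f E ≤ max (1 - α) 0 := by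
    intro E
    have hval : f E = (1 - α) * (P E).toReal := by rw [hf]; ring
    have h0 : 0 ≤ (P E).toReal := ENNReal.toReal_nonneg
    have h1 : (P E).toReal ≤ 1 := by
      have h := ENNReal.toReal_mono (measure_ne_top P Set.univ)
        (measure_mono (Set.subset_univ (E : Set Ω)))
      rwa [measure_univ, ENNReal.toReal_one] at h
    rcases le_total α 1 with h | h
    · refine le_trans ?_ (le_max_left _ _)
      rw [hval]
      nlinarith
    · refine le_trans ?_ (le_max_right _ _)
      rw [hval]
      nlinarith
  refine le_antisymm (ciSup_le hub) ?_
  have hbdd : BddAbove (Set.range f) := ⟨max (1 - α) 0, by rintro v ⟨E, rfl⟩; exact hub E⟩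
  rcases le_total α 1 with h | h
  · refine le_trans ?_ (le_ciSup hbdd (⟨Set.univ, MeasurableSet.univ⟩ : {E : Set Ω // MeasurableSet E}))
    rw [hf]
    simp only [measure_univ, ENNReal.toReal_one]
    rw [max_eq_left (by linarith)]
    ring_nf
    exact le_refl _
  · refine le_trans ?_ (le_ciSup hbdd (⟨∅, MeasurableSet.empty⟩ : {E : Set Ω // MeasurableSet E}))
    rw [hf]
    simp only [measure_empty, ENNReal.toReal_zero, mul_zero, sub_zero]
    rw [max_eq_right (by linarith)]

end opt

end Auxiliary

/-- integrability of a nonneg density whose withDensity is a probability measure -/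
lemma integrable_of_withDensity_prob {Ω : Type*} [MeasurableSpace Ω] (Q : Measure Ω)
    (r : Ω → ℝ) (hr : Measurable r) (hr0 : ∀ x, 0 ≤ r x)
    [IsProbabilityMeasure (Q.withDensity fun x => ENNReal.ofReal (r x))] :
    Integrable r Q := by
  have hlt : ∫⁻ x, ENNReal.ofReal (r x) ∂Q ≠ ⊤ := by
    have h : (Q.withDensity fun x => ENNReal.ofReal (r x)) Set.univ = 1 := measure_univ
    rw [withDensity_apply _ MeasurableSet.univ, Measure.restrict_univ] at h
    rw [h]
    exact ENNReal.one_ne_top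
  have := integrable_toReal_of_lintegral_ne_top (by fun_prop : Measurable fun x =>
    ENNReal.ofReal (r x)).aemeasurable hlt
  simpa [ENNReal.toReal_ofReal, hr0] using this

set_option maxHeartbeats 1000000 in
/-- The (non-adaptive) composition of `k` Gaussian mechanisms with parameters `μ_1, …, μ_k`
is exactly as distinguishable as a single unit-variance Gaussian pair with means
`√(Σ μ_i²)` apart. -/
theorem hockeyStick_gaussian_product (k : ℕ) (hk : 1 ≤ k) (μ : Fin k → ℝ)
    (hμ : ∀ i, 0 ≤ μ i) :
    ∀ α : ℝ, 0 < α →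
      hockeyStick α (Measure.pi (fun i : Fin k => gaussianReal (μ i) 1))
          (Measure.pi (fun _ : Fin k => gaussianReal 0 1))
        = hockeyStick α (gaussianReal (Real.sqrt (∑ i, μ i ^ 2)) 1) (gaussianReal 0 1) := by
  intro α hα
  by_cases hz : ∑ i, μ i ^ 2 = 0
  · have hμ0 : ∀ i, μ i = 0 := by
      intro i
      have h := (Finset.sum_eq_zero_iff_of_nonneg (fun j _ => sq_nonneg (μ j))).mp hz i
        (Finset.mem_univ i)
      exact pow_eq_zero_iff two_ne_zero |>.mp h
    rw [hz, Real.sqrt_zero,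
      show (fun i : Fin k => gaussianReal (μ i) 1) = fun _ => gaussianReal 0 1 from
        funext fun i => by rw [hμ0 i],
      hockeyStick_self, hockeyStick_self]
  · have hsum : 0 < ∑ i, μ i ^ 2 :=
      lt_of_le_of_ne (Finset.sum_nonneg fun i _ => sq_nonneg _) (Ne.symm hz)
    set s : ℝ := Real.sqrt (∑ i, μ i ^ 2) with hs
    have hspos : 0 < s := Real.sqrt_pos.mpr hsum
    have hs2 : s ^ 2 = ∑ i, μ i ^ 2 := Real.sq_sqrt hsum.le
    set r1 : ℝ → ℝ := fun t => Real.exp (s * t - s ^ 2 / 2) with hr1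
    set E1 : Set ℝ := {t | α < r1 t} with hE1
    have hr1m : Measurable r1 := by fun_prop
    have hE1m : MeasurableSet E1 := measurableSet_lt measurable_const hr1m
    have hP1 : gaussianReal s 1
        = (gaussianReal 0 1).withDensity (fun t => ENNReal.ofReal (r1 t)) := by
      rw [gaussianReal_eq_withDensity s]; rfl
    have hprob1 : IsProbabilityMeasure
        ((gaussianReal 0 1).withDensity fun t => ENNReal.ofReal (r1 t)) := by
      rw [← hP1]; infer_instance
    have hint1 : Integrable r1 (gaussianReal 0 1) :=
      integrable_of_withDensity_prob _ r1 hr1m (fun t => Real.exp_nonneg _)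
    have hRHS := hockeyStick_eq_of_optimal α (gaussianReal s 1) (gaussianReal 0 1) E1 hE1m
      (by
        intro E hE
        rw [hP1]
        exact opt_bound (gaussianReal 0 1) r1 hr1m (fun t => Real.exp_nonneg _) hint1 α E hE)
    -- k dimensional side
    set rk : (Fin k → ℝ) → ℝ :=
      fun x => Real.exp ((∑ i, μ i * x i) - (∑ i, μ i ^ 2) / 2) with hrk
    have hrkm : Measurable rk := by
      apply Measurable.exp
      apply Measurable.sub _ measurable_const
      exact Finset.measurable_sum _ fun i _ => (measurable_pi_apply i).const_mul _
    have hPk : Measure.pi (fun i => gaussianReal (μ i) 1)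
        = (Measure.pi fun _ : Fin k => gaussianReal 0 1).withDensity
            (fun x => ENNReal.ofReal (rk x)) := by
      rw [pi_gaussian_withDensity k μ]
      congr 1
      funext x
      unfold gRatio
      rw [← ENNReal.ofReal_prod_of_nonneg (fun i _ => Real.exp_nonneg _), ← Real.exp_sum]
      rw [hrk]
      congr 2
      rw [Finset.sum_sub_distrib, Finset.sum_div]
    have hprobk : IsProbabilityMeasure ((Measure.pi fun _ : Fin k => gaussianReal 0 1).withDensity
        fun x => ENNReal.ofReal (rk x)) := by
      rw [← hPk]; infer_instance
    have hintk : Integrable rk (Measure.pi fun _ : Fin k => gaussianReal 0 1) :=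
      integrable_of_withDensity_prob _ rk hrkm (fun x => Real.exp_nonneg _)
    set Ek : Set (Fin k → ℝ) := {x | α < rk x} with hEkdef
    have hEkm : MeasurableSet Ek := measurableSet_lt measurable_const hrkm
    have hLHS := hockeyStick_eq_of_optimal α (Measure.pi fun i => gaussianReal (μ i) 1)
      (Measure.pi fun _ : Fin k => gaussianReal 0 1) Ek hEkm
      (by
        intro E hE
        rw [hPk]
        exact opt_bound _ rk hrkm (fun x => Real.exp_nonneg _) hintk α E hE)
    set T : (Fin k → ℝ) → ℝ := fun x => ∑ i, (μ i / s) * x i with hT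
    have hTm : Measurable T :=
      Finset.measurable_sum _ fun i _ => (measurable_pi_apply i).const_mul _
    have hrkT : ∀ x, rk x = r1 (T x) := by
      intro x
      simp only [hrk, hr1, hT]
      rw [Real.exp_eq_exp, hs2]
      congr 1
      rw [Finset.mul_sum]
      refine Finset.sum_congr rfl fun i _ => ?_
      field_simp
    have hEk : Ek = T ⁻¹' E1 := by
      ext x
      simp only [hEkdef, hE1, Set.mem_setOf_eq, Set.mem_preimage, hrkT x]
    have hvar : Real.toNNReal (∑ i, (μ i / s) ^ 2) = 1 := by
      have : ∑ i, (μ i / s) ^ 2 = 1 := by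
        simp_rw [div_pow]
        rw [← Finset.sum_div, ← hs2]
        field_simp
      rw [this, Real.toNNReal_one]
    have hmapP : Measure.map T (Measure.pi fun i => gaussianReal (μ i) 1)
        = gaussianReal s 1 := by
      rw [hT, map_sum_pi k (fun i => μ i / s) μ, hvar]
      congr 1
      have : ∑ i, μ i / s * μ i = (∑ i, μ i ^ 2) / s := by
        rw [Finset.sum_div]
        refine Finset.sum_congr rfl fun i _ => ?_
        field_simp
      rw [this, ← hs2]
      field_simp
    have hmapQ : Measure.map T (Measure.pi fun _ : Fin k => gaussianReal 0 1)
        = gaussianReal 0 1 := by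
      rw [hT, map_sum_pi k (fun i => μ i / s) (fun _ => 0), hvar]
      congr 1
      simp
    have hPE : (Measure.pi fun i => gaussianReal (μ i) 1) Ek = gaussianReal s 1 E1 := by
      rw [hEk, ← Measure.map_apply hTm hE1m, hmapP]
    have hQE : (Measure.pi fun _ : Fin k => gaussianReal 0 1) Ek = gaussianReal 0 1 E1 := by
      rw [hEk, ← Measure.map_apply hTm hE1m, hmapQ]
    rw [hLHS, hRHS, hPE, hQE]
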